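/- Let H be a separable complex Hilbert space, {S_γ}_{γ∈Γ} a family of closed subspaces of H, χ = ∪_{γ∈Γ} S_γ, and S̄_{γ,θ} the closure of S_γ + S_θ. Let Ψ = {ψ_i}_{i∈I} be a Bessel sequence in H and A its sampling operator. If for every γ,θ ∈ Γ the family {P_{S̄_{γ,θ}} ψ_i}_{i∈I} is complete in S̄_{γ,θ} (its span is dense in S̄_{γ,θ}), then A is one-to-one on χ. -/

import Mathlib

open scoped ComplexInnerProductSpace

/-- Let `{S γ}_{γ ∈ Γ}` be a family of closed subspaces of a separable complex
Hilbert space `H`, `χ = ⋃ γ, S γ`, and `S̄_{γ,θ}` the closure of `S γ + S θ`.  Let `Ψ` be a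
Bessel sequence in `H` and `A` its sampling operator.  If for every `γ, θ ∈ Γ` the family
`{P_{S̄_{γ,θ}} ψ i}_{i ∈ I}` is complete in `S̄_{γ,θ}`, then `A` is one-to-one on `χ`. -/
theorem stmt_4
    {H : Type*} [NormedAddCommGroup H] [InnerProductSpace ℂ H] [CompleteSpace H]
    [SecondCountableTopology H]
    {I : Type*} [Countable I]
    {Γ : Type*} (S : Γ → Submodule ℂ H) (hS : ∀ γ, IsClosed ((S γ : Submodule ℂ H) : Set H))
    (ψ : I → H) (B : ℝ) (hB : 0 < B)
    (hBessel : ∀ h : H, ∑' i : I, ‖⟪ψ i, h⟫‖ ^ 2 ≤ B * ‖h‖ ^ 2)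
    (A : H →L[ℂ] lp (fun _ : I => ℂ) 2)
    (hA : ∀ f : H, ∀ i : I, A f i = ⟪ψ i, f⟫)
    (hcomplete : ∀ γ θ : Γ,
      (S γ ⊔ S θ : Submodule ℂ H).topologicalClosure =
        (Submodule.span ℂ (Set.range fun i : I =>
          (Submodule.orthogonalProjectionOnto (S γ ⊔ S θ : Submodule ℂ H).topologicalClosure (ψ i) : H)
            )).topologicalClosure) :
    Set.InjOn A (⋃ γ : Γ, (S γ : Set H)) := by
  rintro f hf g hg hfg
  rw [Set.mem_iUnion] at hf hg
  obtain ⟨γ, hf⟩ := hf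
  obtain ⟨θ, hg⟩ := hg
  set M : Submodule ℂ H := (S γ ⊔ S θ : Submodule ℂ H).topologicalClosure with hM
  -- x := f - g lies in M
  set x : H := f - g with hx
  have hxM : x ∈ M := by
    apply Submodule.le_topologicalClosure
    exact sub_mem (Submodule.mem_sup_left hf) (Submodule.mem_sup_right hg)
  -- ⟪ψ i, x⟫ = 0 for all i
  have hinner : ∀ i : I, ⟪ψ i, x⟫ = 0 := by
    intro i
    have h1 : A f i = A g i := by rw [hfg]
    rw [hA, hA] at h1
    simp [hx, inner_sub_right, h1]
  -- x is orthogonal to every P_M ψ i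
  have horth : ∀ i : I, ⟪(Submodule.orthogonalProjectionOnto M (ψ i) : H), x⟫ = 0 := by
    intro i
    rw [← Submodule.starProjection_apply, Submodule.inner_starProjection_left_eq_right]
    rw [Submodule.starProjection_eq_self_iff.mpr ?_]
    · exact hinner i
    · exact hxM
  -- hence x ∈ (span range ...)ᗮ
  set K : Submodule ℂ H := Submodule.span ℂ (Set.range fun i : I =>
      (Submodule.orthogonalProjectionOnto M (ψ i) : H)) with hK
  have hxK : x ∈ Kᗮ := by
    rw [Submodule.mem_orthogonal]
    intro u hu
    induction hu using Submodule.span_induction with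
    | mem u hu => obtain ⟨i, rfl⟩ := hu; exact horth i
    | zero => simp
    | add u v _ _ hu hv => simp [inner_add_left, hu, hv]
    | smul c u _ hu => simp [inner_smul_left, hu]
  -- and x ∈ closure K = M, so x ∈ Kᗮᗮ
  have hxKK : x ∈ Kᗮᗮ := by
    have h1 : M ≤ Kᗮᗮ := by
      rw [hM, hcomplete γ θ]
      exact Submodule.topologicalClosure_minimal _ (Submodule.le_orthogonal_orthogonal K)
        Kᗮ.isClosed_orthogonal
    exact h1 hxM
  have hx0 : x = 0 := by
    have := (Submodule.orthogonal_disjoint Kᗮ).le_bot ⟨hxK, hxKK⟩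
    simpa using this
  exact sub_eq_zero.mp hx0
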